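/- arXiv:1712.05743 — 4 statements merged into one kernel-verified Lean document; each statement's English description precedes it below -/
import Mathlib

section
/- Let μ and ν be probability measures on Ω = {-1,+1}^n, ν with full support, and let P be the irreducible Glauber dynamics kernel of μ. Let f : Ω → ℝ and let h solve the Poisson equation h − Ph = f − E_μ f. Then |E_μ f − E_ν f| ≤ E_ν [ (1/n) Σ_{i=1}^n |Δ_i(h)(x)| · ‖μ_i(·|x^{(∼i)}) − ν_i(·|x^{(∼i)})‖_TV ]. -/
open Finset

/-- Spin value ±1 of a Boolean coordinate. -/
noncomputable def spin (b : Bool) : ℝ := if b then 1 else -1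

/-- Configuration `x` with coordinate `i` set to `+1`. -/
noncomputable def up {n : ℕ} (x : Fin n → Bool) (i : Fin n) : Fin n → Bool :=
  Function.update x i true

/-- Configuration `x` with coordinate `i` set to `-1`. -/
noncomputable def dn {n : ℕ} (x : Fin n → Bool) (i : Fin n) : Fin n → Bool :=
  Function.update x i false

/-- Conditional probability `μ_i(1 | x^{(∼i)})`. -/
noncomputable def condProb {n : ℕ} (μ : (Fin n → Bool) → ℝ) (x : Fin n → Bool) (i : Fin n) : ℝ :=
  μ (up x i) / (μ (up x i) + μ (dn x i))

/-- Glauber dynamics kernel of `μ`, acting on functions. -/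
noncomputable def glauberOp {n : ℕ} (μ : (Fin n → Bool) → ℝ) (h : (Fin n → Bool) → ℝ)
    (x : Fin n → Bool) : ℝ :=
  (1 / n) * ∑ i, (condProb μ x i * h (up x i) + (1 - condProb μ x i) * h (dn x i))

/-- Discrete derivative `Δ_i(h)(x) = h(x^{(i,+)}) - h(x^{(i,-)})`. -/
noncomputable def disc {n : ℕ} (i : Fin n) (h : (Fin n → Bool) → ℝ) (x : Fin n → Bool) : ℝ :=
  h (up x i) - h (dn x i)

/-- Expectation of `f` under the probability mass function `μ`. -/
noncomputable def expect {n : ℕ} (μ : (Fin n → Bool) → ℝ) (f : (Fin n → Bool) → ℝ) : ℝ :=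
  ∑ x, μ x * f x

-- flip involution
def flipI {n : ℕ} (i : Fin n) (x : Fin n → Bool) : Fin n → Bool :=
  Function.update x i (!x i)

lemma flip_invol {n : ℕ} (i : Fin n) : Function.Involutive (flipI i) := by
  intro x
  funext j
  by_cases hj : j = i
  · subst hj; simp [flipI]
  · simp [flipI, Function.update_of_ne hj]

lemma up_flip {n : ℕ} (x : Fin n → Bool) (i : Fin n) : up (flipI i x) i = up x i := by
  simp [up, flipI, Function.update_idem]

lemma dn_flip {n : ℕ} (x : Fin n → Bool) (i : Fin n) : dn (flipI i x) i = dn x i := by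
  simp [dn, flipI, Function.update_idem]

lemma pair_eq {n : ℕ} (i : Fin n) (x : Fin n → Bool) (G : (Fin n → Bool) → ℝ) :
    G x + G (flipI i x) = G (up x i) + G (dn x i) := by
  cases hx : x i
  · have h1 : dn x i = x := by
      funext j; by_cases hj : j = i
      · subst hj; simp [dn, hx]
      · simp [dn, Function.update_of_ne hj]
    have h2 : flipI i x = up x i := by simp [flipI, up, hx]
    rw [h1, h2]; ring
  · have h1 : up x i = x := by
      funext j; by_cases hj : j = i
      · subst hj; simp [up, hx]
      · simp [up, Function.update_of_ne hj]
    have h2 : flipI i x = dn x i := by simp [flipI, dn, hx]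
    rw [h1, h2]

lemma stationary {n : ℕ} (ν : (Fin n → Bool) → ℝ) (hνpos : ∀ x, 0 < ν x)
    (h : (Fin n → Bool) → ℝ) (i : Fin n) :
    ∑ x, ν x * (condProb ν x i * h (up x i) + (1 - condProb ν x i) * h (dn x i))
      = ∑ x, ν x * h x := by
  set T : (Fin n → Bool) → ℝ :=
    fun x => condProb ν x i * h (up x i) + (1 - condProb ν x i) * h (dn x i) with hT
  have hTflip : ∀ x, T (flipI i x) = T x := by
    intro x
    simp [hT, condProb, up_flip, dn_flip]
  have hsum2 : ∀ G : (Fin n → Bool) → ℝ, (2:ℝ) * ∑ x, G x = ∑ x, (G x + G (flipI i x)) := by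
    intro G
    rw [Finset.sum_add_distrib]
    have : ∑ x, G (flipI i x) = ∑ x, G x :=
      Fintype.sum_equiv ((flip_invol i).toPerm _).symm _ _ (fun x => by
        simp [Function.Involutive.toPerm])
    rw [this]; ring
  have key : ∀ x, ν (up x i) * h (up x i) + ν (dn x i) * h (dn x i)
      = (ν (up x i) + ν (dn x i)) * T x := by
    intro x
    have h1 := hνpos (up x i)
    have h2 := hνpos (dn x i)
    have hpos : ν (up x i) + ν (dn x i) > 0 := by linarith
    simp only [hT, condProb]
    field_simp
    ring
  have h2 : (2:ℝ) * ∑ x, ν x * T x = (2:ℝ) * ∑ x, ν x * h x := by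
    rw [hsum2, hsum2]
    apply Finset.sum_congr rfl
    intro x _
    rw [hTflip]
    have e1 : ν x * T x + ν (flipI i x) * T x = (ν x + ν (flipI i x)) * T x := by ring
    rw [e1]
    have e2 : ν x + ν (flipI i x) = ν (up x i) + ν (dn x i) := pair_eq i x ν
    rw [e2, ← key]
    exact (pair_eq i x (fun y => ν y * h y)).symm
  linarith

theorem stmt1 {n : ℕ} (hn : 0 < n) (μ ν : (Fin n → Bool) → ℝ)
    (hμpos : ∀ x, 0 < μ x) (hνpos : ∀ x, 0 < ν x)
    (hμsum : ∑ x, μ x = 1) (hνsum : ∑ x, ν x = 1)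
    (f h : (Fin n → Bool) → ℝ)
    (hPoisson : ∀ x, h x - glauberOp μ h x = f x - expect μ f) :
    |expect μ f - expect ν f|
      ≤ expect ν (fun x => (1 / n) * ∑ i, |disc i h x| * |condProb μ x i - condProb ν x i|) := by
  have hnR : (0:ℝ) < n := by exact_mod_cast hn
  -- stationarity of ν for its own Glauber
  have hstat : ∑ x, ν x * glauberOp ν h x = ∑ x, ν x * h x := by
    have e0 : ∑ x, ν x * glauberOp ν h x
        = ∑ x, ∑ i : Fin n, (1/(n:ℝ)) * (ν x *
            (condProb ν x i * h (up x i) + (1 - condProb ν x i) * h (dn x i))) := by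
      apply Finset.sum_congr rfl
      intro x _
      rw [glauberOp, Finset.mul_sum, Finset.mul_sum]
      apply Finset.sum_congr rfl
      intro i _
      ring
    rw [e0, Finset.sum_comm]
    have e1 : ∀ i : Fin n, ∑ x, (1/(n:ℝ)) * (ν x *
        (condProb ν x i * h (up x i) + (1 - condProb ν x i) * h (dn x i)))
        = (1/(n:ℝ)) * ∑ x, ν x * h x := by
      intro i
      rw [← Finset.mul_sum, stationary ν hνpos h i]
    simp only [e1, Finset.sum_const, Finset.card_univ, Fintype.card_fin, nsmul_eq_mul]
    field_simp
  -- main identity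
  have hid : _root_.expect ν f - _root_.expect μ f
      = ∑ x, ν x * ((1/n) * ∑ i, (condProb ν x i - condProb μ x i) * disc i h x) := by
    have e1 : _root_.expect ν f - _root_.expect μ f = ∑ x, ν x * (f x - _root_.expect μ f) := by
      simp only [_root_.expect, mul_sub, Finset.sum_sub_distrib, ← Finset.sum_mul, hνsum,
        one_mul]
    rw [e1]
    have e2 : ∑ x, ν x * (f x - _root_.expect μ f) = ∑ x, ν x * (h x - glauberOp μ h x) := by
      apply Finset.sum_congr rfl
      intro x _
      rw [hPoisson x]
    rw [e2]
    have e3 : ∑ x, ν x * (h x - glauberOp μ h x)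
        = ∑ x, ν x * (glauberOp ν h x - glauberOp μ h x) := by
      simp only [mul_sub, Finset.sum_sub_distrib, hstat]
    rw [e3]
    apply Finset.sum_congr rfl
    intro x _
    congr 1
    rw [glauberOp, glauberOp, ← mul_sub, ← Finset.sum_sub_distrib, Finset.mul_sum,
      Finset.mul_sum]
    apply Finset.sum_congr rfl
    intro i _
    rw [disc]
    ring
  rw [abs_sub_comm, hid]
  simp only [_root_.expect]
  calc |∑ x, ν x * ((1/n) * ∑ i, (condProb ν x i - condProb μ x i) * disc i h x)|
      ≤ ∑ x, |ν x * ((1/n) * ∑ i, (condProb ν x i - condProb μ x i) * disc i h x)| :=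
        Finset.abs_sum_le_sum_abs _ _
    _ ≤ ∑ x, ν x * ((1/n) * ∑ i, |disc i h x| * |condProb μ x i - condProb ν x i|) := by
        apply Finset.sum_le_sum
        intro x _
        rw [abs_mul, abs_of_pos (hνpos x), abs_mul]
        apply mul_le_mul_of_nonneg_left _ (le_of_lt (hνpos x))
        rw [abs_of_pos (by positivity : (0:ℝ) < 1/(n:ℝ))]
        apply mul_le_mul_of_nonneg_left _ (by positivity : (0:ℝ) ≤ 1/(n:ℝ))
        calc |∑ i, (condProb ν x i - condProb μ x i) * disc i h x|
            ≤ ∑ i, |(condProb ν x i - condProb μ x i) * disc i h x| :=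
              Finset.abs_sum_le_sum_abs _ _
          _ = ∑ i, |disc i h x| * |condProb μ x i - condProb ν x i| := by
              apply Finset.sum_congr rfl
              intro i _
              rw [abs_mul, abs_sub_comm, mul_comm]
end

section
/- Let P be a finite-state irreducible Markov kernel on Ω with stationary distribution μ, and let f : Ω → ℝ. Suppose P is α-contractive for some α ∈ [0,1), i.e., there is a coupling of two P-chains (X_t), (Y_t) such that E[d_H(X_t, Y_t) | X_0 = x, Y_0 = y] ≤ α^t d_H(x,y) for all t and all x,y. If f is L-Lipschitz with respect to the Hamming metric, then the principal solution h(x) = Σ_{t≥0} E[f(X_t) − E_μ f | X_0 = x] of the Poisson equation h − Ph = f − E_μ f satisfies |Δ_i(h)(x)| ≤ L/(1−α) for every coordinate i and every x ∈ Ω. -/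
open Finset

/-- Action of a Markov kernel on functions: `(Pf)(x) = Σ_y P(x,y) f(y)`. -/
noncomputable def act {n : ℕ} (P : (Fin n → Bool) → (Fin n → Bool) → ℝ)
    (f : (Fin n → Bool) → ℝ) (x : Fin n → Bool) : ℝ :=
  ∑ y, P x y * f y

/-- Action of a coupled (pair) Markov kernel on functions of pairs. -/
noncomputable def act2 {n : ℕ}
    (K : ((Fin n → Bool) × (Fin n → Bool)) → ((Fin n → Bool) × (Fin n → Bool)) → ℝ)
    (f : ((Fin n → Bool) × (Fin n → Bool)) → ℝ)
    (p : (Fin n → Bool) × (Fin n → Bool)) : ℝ :=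
  ∑ q, K p q * f q

/-- Hamming distance between two configurations. -/
noncomputable def hamming {n : ℕ} (x y : Fin n → Bool) : ℝ :=
  ∑ i, if x i = y i then 0 else 1

theorem stmt2 {n : ℕ} (hn : 0 < n)
    (P : (Fin n → Bool) → (Fin n → Bool) → ℝ)
    (hProws : ∀ x, (∀ y, 0 ≤ P x y) ∧ ∑ y, P x y = 1)
    (hirr : ∀ x y : Fin n → Bool,
      ∃ t : ℕ, 0 < (act P)^[t] (fun z => if z = y then (1 : ℝ) else 0) x)
    (μ : (Fin n → Bool) → ℝ) (hμnn : ∀ x, 0 ≤ μ x) (hμsum : ∑ x, μ x = 1)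
    (hstat : ∀ y, ∑ x, μ x * P x y = μ y)
    (α : ℝ) (hα : α ∈ Set.Ico (0 : ℝ) 1)
    (K : ((Fin n → Bool) × (Fin n → Bool)) → ((Fin n → Bool) × (Fin n → Bool)) → ℝ)
    (hKrows : ∀ p, (∀ q, 0 ≤ K p q) ∧ ∑ q, K p q = 1)
    (hK1 : ∀ p c, ∑ d, K p (c, d) = P p.1 c)
    (hK2 : ∀ p d, ∑ c, K p (c, d) = P p.2 d)
    (hcontr : ∀ (t : ℕ) (x y : Fin n → Bool),
      (act2 K)^[t] (fun q => hamming q.1 q.2) (x, y) ≤ α ^ t * hamming x y)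
    (L : ℝ) (f : (Fin n → Bool) → ℝ)
    (hf : ∀ x y, |f x - f y| ≤ L * hamming x y) :
    ∀ (i : Fin n) (x : Fin n → Bool),
      |disc i (fun z => ∑' t : ℕ, ((act P)^[t] f z - expect μ f)) x| ≤ L / (1 - α) := by
  obtain ⟨hα0, hα1⟩ := hα
  intro i x
  -- L is nonnegative
  have hL : 0 ≤ L := by
    have h1 : hamming (fun _ : Fin n => true) (fun _ : Fin n => false) = n := by
      simp [hamming]
    have h2 := hf (fun _ => true) (fun _ => false)
    rw [h1] at h2
    nlinarith [abs_nonneg (f (fun _ : Fin n => true) - f (fun _ : Fin n => false)),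
      (Nat.cast_pos (α := ℝ)).mpr hn]
  -- hamming basics
  have hham_nn : ∀ x y : Fin n → Bool, 0 ≤ hamming x y := by
    intro x y
    apply Finset.sum_nonneg
    intro j _
    split <;> norm_num
  have hham_le : ∀ x y : Fin n → Bool, hamming x y ≤ n := by
    intro x y
    calc hamming x y ≤ ∑ _j : Fin n, (1 : ℝ) := by
          apply Finset.sum_le_sum; intro j _; split <;> norm_num
      _ = n := by simp
  -- monotonicity of iterated act2
  have hmono : ∀ (F G : ((Fin n → Bool) × (Fin n → Bool)) → ℝ), (∀ p, F p ≤ G p) →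
      ∀ t p, (act2 K)^[t] F p ≤ (act2 K)^[t] G p := by
    intro F G h t
    induction t with
    | zero => simpa using h
    | succ t ih =>
      intro p
      rw [Function.iterate_succ_apply', Function.iterate_succ_apply']
      unfold act2
      apply Finset.sum_le_sum
      intro q _
      exact mul_le_mul_of_nonneg_left (ih q) ((hKrows p).1 q)
  -- scalar multiplication commutes with iterated act2
  have hsmul : ∀ (c : ℝ) (F : ((Fin n → Bool) × (Fin n → Bool)) → ℝ) (t : ℕ) (p),
      (act2 K)^[t] (fun q => c * F q) p = c * (act2 K)^[t] F p := by
    intro c F t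
    induction t with
    | zero => intro p; rfl
    | succ t ih =>
      intro p
      simp only [Function.iterate_succ_apply']
      rw [funext ih]
      unfold act2
      rw [Finset.mul_sum]
      congr 1; funext q; ring
  -- coupling identity: act2 iterate of f q.1 - f q.2 splits
  have hsplit : ∀ (t : ℕ) (p : (Fin n → Bool) × (Fin n → Bool)),
      (act2 K)^[t] (fun q => f q.1 - f q.2) p = (act P)^[t] f p.1 - (act P)^[t] f p.2 := by
    intro t
    induction t with
    | zero => intro p; rfl
    | succ t ih =>
      intro p
      simp only [Function.iterate_succ_apply']
      rw [funext ih]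
      unfold act2
      have e1 : ∑ q : (Fin n → Bool) × (Fin n → Bool),
          K p q * ((act P)^[t] f q.1 - (act P)^[t] f q.2)
          = (∑ q : (Fin n → Bool) × (Fin n → Bool), K p q * (act P)^[t] f q.1)
            - ∑ q : (Fin n → Bool) × (Fin n → Bool), K p q * (act P)^[t] f q.2 := by
        rw [← Finset.sum_sub_distrib]; congr 1; funext q; ring
      rw [e1]
      congr 1
      · rw [Fintype.sum_prod_type]
        unfold act
        dsimp only
        apply Finset.sum_congr rfl
        intro a _
        rw [← Finset.sum_mul, hK1 p a]
      · rw [Fintype.sum_prod_type, Finset.sum_comm]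
        unfold act
        dsimp only
        apply Finset.sum_congr rfl
        intro b _
        rw [← Finset.sum_mul, hK2 p b]
  -- key contraction bound for P-iterates
  have hkey : ∀ (t : ℕ) (x y : Fin n → Bool),
      |(act P)^[t] f x - (act P)^[t] f y| ≤ L * α ^ t * hamming x y := by
    intro t x y
    rw [← hsplit t (x, y)]
    rw [abs_le]
    constructor
    · have h1 : ∀ q : (Fin n → Bool) × (Fin n → Bool),
          (fun q => (-L) * hamming q.1 q.2) q ≤ (fun q => f q.1 - f q.2) q := by
        intro q
        have := hf q.1 q.2
        have := abs_le.mp this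
        simp only [neg_mul]
        linarith [this.1]
      have h2 := hmono _ _ h1 t (x, y)
      rw [hsmul (-L) (fun q => hamming q.1 q.2) t (x, y)] at h2
      have h3 := hcontr t x y
      nlinarith [hham_nn x y]
    · have h2 := hmono (fun q => f q.1 - f q.2) (fun q => L * hamming q.1 q.2)
        (fun q => (abs_le.mp (hf q.1 q.2)).2) t (x, y)
      rw [hsmul L (fun q => hamming q.1 q.2) t (x, y)] at h2
      have h3 := hcontr t x y
      nlinarith [hham_nn x y]
  -- expectation is stationary
  have hexp1 : ∀ g : (Fin n → Bool) → ℝ, expect μ (act P g) = expect μ g := by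
    intro g
    unfold _root_.expect act
    have e : ∀ xx : Fin n → Bool, μ xx * ∑ y, P xx y * g y = ∑ y, μ xx * P xx y * g y := by
      intro xx
      rw [Finset.mul_sum]
      apply Finset.sum_congr rfl
      intro y _; ring
    simp only [e]
    rw [Finset.sum_comm]
    apply Finset.sum_congr rfl
    intro y _
    rw [← Finset.sum_mul, hstat y]
  have hexp : ∀ t : ℕ, expect μ ((act P)^[t] f) = expect μ f := by
    intro t
    induction t with
    | zero => rfl
    | succ t ih => rw [Function.iterate_succ_apply', hexp1, ih]
  -- bound on deviation from the mean
  have hLa : ∀ t : ℕ, 0 ≤ L * α ^ t := fun t => mul_nonneg hL (pow_nonneg hα0 t)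
  have hbound : ∀ (t : ℕ) (z : Fin n → Bool),
      |(act P)^[t] f z - expect μ f| ≤ L * ↑n * α ^ t := by
    intro t z
    have e : ∑ y, μ y * ((act P)^[t] f z - (act P)^[t] f y)
        = (act P)^[t] f z - expect μ f := by
      have e2 : ∑ y, μ y * ((act P)^[t] f z - (act P)^[t] f y)
          = (∑ y, μ y) * (act P)^[t] f z - ∑ y, μ y * (act P)^[t] f y := by
        rw [Finset.sum_mul, ← Finset.sum_sub_distrib]
        apply Finset.sum_congr rfl
        intro y _; ring
      rw [e2, hμsum, one_mul, ← hexp t]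
      rfl
    rw [← e]
    calc |∑ y, μ y * ((act P)^[t] f z - (act P)^[t] f y)|
        ≤ ∑ y, |μ y * ((act P)^[t] f z - (act P)^[t] f y)| := Finset.abs_sum_le_sum_abs _ _
      _ ≤ ∑ y : Fin n → Bool, μ y * (L * α ^ t * ↑n) := by
          apply Finset.sum_le_sum
          intro y _
          rw [abs_mul, abs_of_nonneg (hμnn y)]
          apply mul_le_mul_of_nonneg_left _ (hμnn y)
          calc |(act P)^[t] f z - (act P)^[t] f y| ≤ L * α ^ t * hamming z y := hkey t z y
            _ ≤ L * α ^ t * ↑n := mul_le_mul_of_nonneg_left (hham_le z y) (hLa t)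
      _ = L * ↑n * α ^ t := by rw [← Finset.sum_mul, hμsum]; ring
  -- summability
  have hgeo0 : Summable (fun t : ℕ => α ^ t) := summable_geometric_of_lt_one hα0 hα1
  have hs1 : Summable (fun t : ℕ => (act P)^[t] f (up x i) - expect μ f) := by
    apply Summable.of_norm_bounded (hgeo0.mul_left (L * ↑n))
    intro t
    simpa [Real.norm_eq_abs] using hbound t (up x i)
  have hs2 : Summable (fun t : ℕ => (act P)^[t] f (dn x i) - expect μ f) := by
    apply Summable.of_norm_bounded (hgeo0.mul_left (L * ↑n))
    intro t
    simpa [Real.norm_eq_abs] using hbound t (dn x i)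
  -- hamming distance between up and dn is 1
  have hud : hamming (up x i) (dn x i) = 1 := by
    unfold hamming up dn
    rw [Finset.sum_eq_single i]
    · simp
    · intro j _ hj
      simp [Function.update_of_ne hj]
    · simp
  -- final computation
  unfold disc
  dsimp only
  rw [← Summable.tsum_sub hs1 hs2]
  have habs : ∀ t : ℕ,
      |((act P)^[t] f (up x i) - expect μ f) - ((act P)^[t] f (dn x i) - expect μ f)|
        ≤ L * α ^ t := by
    intro t
    have e : ((act P)^[t] f (up x i) - expect μ f) - ((act P)^[t] f (dn x i) - expect μ f)
        = (act P)^[t] f (up x i) - (act P)^[t] f (dn x i) := by ring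
    rw [e]
    calc |(act P)^[t] f (up x i) - (act P)^[t] f (dn x i)|
        ≤ L * α ^ t * hamming (up x i) (dn x i) := hkey t _ _
      _ = L * α ^ t := by rw [hud, mul_one]
  have hs3 := hs1.sub hs2
  calc |∑' t : ℕ, (((act P)^[t] f (up x i) - expect μ f) - ((act P)^[t] f (dn x i) - expect μ f))|
      ≤ ∑' t : ℕ, |((act P)^[t] f (up x i) - expect μ f) - ((act P)^[t] f (dn x i) - expect μ f)| := by
        have := norm_tsum_le_tsum_norm (f := fun t : ℕ =>
          ((act P)^[t] f (up x i) - expect μ f) - ((act P)^[t] f (dn x i) - expect μ f))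
          (by simpa [Real.norm_eq_abs] using hs3.abs)
        simpa [Real.norm_eq_abs] using this
    _ ≤ ∑' t : ℕ, L * α ^ t := by
        apply Summable.tsum_le_tsum habs hs3.abs (hgeo0.mul_left L)
    _ = L / (1 - α) := by
        rw [tsum_mul_left, tsum_geometric_of_lt_one hα0 hα1, div_eq_mul_inv]
end

section
/- Let L and M be symmetric n×n real matrices with zero diagonal, and let π_L, π_M be the Ising models with interaction matrices L and M. Let f_1,…,f_n : Ω → ℝ and v_f(x) = (f_1(x),…,f_n(x))^T. Then for every x ∈ Ω: (1/n) Σ_{i=1}^n |f_i(x)| · ‖(π_L)_i(·|x^{(∼i)}) − (π_M)_i(·|x^{(∼i)})‖_TV ≤ ‖L − M‖_2 · ‖v_f(x)‖_2 / (2√n). -/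
open Finset
open scoped Matrix

/-- The ±1 spin vector associated to a Boolean configuration. -/
noncomputable def sigmaVec {n : ℕ} (x : Fin n → Bool) : Fin n → ℝ := fun i => spin (x i)

/-- The Ising model with interaction matrix `J`: `π_J(x) ∝ exp((1/2) xᵀ J x)`. -/
noncomputable def ising {n : ℕ} (J : Matrix (Fin n) (Fin n) ℝ) (x : Fin n → Bool) : ℝ :=
  Real.exp ((1 / 2) * (sigmaVec x ⬝ᵥ J.mulVec (sigmaVec x))) /
    ∑ y, Real.exp ((1 / 2) * (sigmaVec y ⬝ᵥ J.mulVec (sigmaVec y)))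

/-- Spectral (ℓ²-operator) norm of a real square matrix. -/
noncomputable def specNorm {n : ℕ} (M : Matrix (Fin n) (Fin n) ℝ) : ℝ :=
  ‖(Matrix.toEuclideanCLM (𝕜 := ℝ) M : EuclideanSpace ℝ (Fin n) →L[ℝ] EuclideanSpace ℝ (Fin n))‖

noncomputable def g (t : ℝ) : ℝ := Real.exp (2*t) / (Real.exp (2*t) + 1)

lemma g_hasDeriv (t : ℝ) : HasDerivAt g (2*Real.exp (2*t) / (Real.exp (2*t)+1)^2) t := by
  have h1 : HasDerivAt (fun t : ℝ => Real.exp (2*t)) (2*Real.exp (2*t)) t := by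
    simpa [mul_comm] using ((hasDerivAt_id t).const_mul 2).exp
  have hne : Real.exp (2*t) + 1 ≠ 0 := by positivity
  have := h1.div (h1.add_const 1) hne
  refine this.congr_deriv ?_
  ring

lemma g_lip (a b : ℝ) : |g a - g b| ≤ (1/2) * |a - b| := by
  have hlip : LipschitzWith (1/2) g := by
    apply lipschitzWith_of_nnnorm_deriv_le
    · exact fun t => (g_hasDeriv t).differentiableAt
    · intro t
      rw [(g_hasDeriv t).deriv, ← NNReal.coe_le_coe, coe_nnnorm]
      have he : 0 < Real.exp (2*t) := Real.exp_pos _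
      rw [Real.norm_eq_abs, abs_of_nonneg (by positivity), NNReal.coe_div]
      push_cast
      rw [div_le_iff₀ (by positivity)]
      nlinarith [sq_nonneg (Real.exp (2*t) - 1)]
  have := hlip.dist_le_mul a b
  simpa [Real.dist_eq] using this

lemma sigma_up {n : ℕ} (x : Fin n → Bool) (i : Fin n) :
    sigmaVec (up x i) = Function.update (sigmaVec x) i 1 := by
  funext j
  rcases eq_or_ne j i with rfl | h
  · simp [sigmaVec, up, spin]
  · simp [sigmaVec, up, spin, Function.update_of_ne h]

lemma sigma_dn {n : ℕ} (x : Fin n → Bool) (i : Fin n) :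
    sigmaVec (dn x i) = Function.update (sigmaVec x) i (-1) := by
  funext j
  rcases eq_or_ne j i with rfl | h
  · simp [sigmaVec, dn, spin]
  · simp [sigmaVec, dn, spin, Function.update_of_ne h]

lemma up_eq_dn_add {n : ℕ} (x : Fin n → Bool) (i : Fin n) :
    sigmaVec (up x i) = sigmaVec (dn x i) + (2:ℝ) • (Pi.single i (1:ℝ) : Fin n → ℝ) := by
  rw [sigma_up, sigma_dn]
  funext j
  rcases eq_or_ne j i with rfl | h
  · simp; norm_num
  · simp [Function.update_of_ne h, Pi.single_eq_of_ne h]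

lemma mulVec_dn {n : ℕ} (J : Matrix (Fin n) (Fin n) ℝ) (hd : ∀ i, J i i = 0)
    (x : Fin n → Bool) (i : Fin n) :
    J.mulVec (sigmaVec (dn x i)) i = J.mulVec (sigmaVec x) i := by
  simp only [Matrix.mulVec, dotProduct]
  refine Finset.sum_congr rfl fun k _ => ?_
  rcases eq_or_ne k i with rfl | h
  · simp [hd]
  · rw [sigma_dn, Function.update_of_ne h]

lemma quad_diff {n : ℕ} (J : Matrix (Fin n) (Fin n) ℝ) (hs : J.IsSymm) (hd : ∀ i, J i i = 0)
    (x : Fin n → Bool) (i : Fin n) :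
    sigmaVec (up x i) ⬝ᵥ J.mulVec (sigmaVec (up x i))
      = sigmaVec (dn x i) ⬝ᵥ J.mulVec (sigmaVec (dn x i)) + 4 * J.mulVec (sigmaVec x) i := by
  set d := sigmaVec (dn x i) with hdd
  set e : Fin n → ℝ := Pi.single i (1:ℝ) with he
  have hu : sigmaVec (up x i) = d + (2:ℝ) • e := up_eq_dn_add x i
  have hJe : J.mulVec e = fun j => J j i := by
    funext j; simp [he, Matrix.mulVec_single]
  have h1 : d ⬝ᵥ J.mulVec e = J.mulVec d i := by
    rw [hJe]
    simp only [Matrix.mulVec, dotProduct]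
    refine Finset.sum_congr rfl fun k _ => ?_
    have hki : J k i = J i k := congrFun (congrFun hs i) k
    rw [hki, mul_comm]
  have h2 : e ⬝ᵥ J.mulVec d = J.mulVec d i := by simp [he, single_dotProduct]
  have h3 : e ⬝ᵥ J.mulVec e = 0 := by simp [he, single_dotProduct, hJe, hd]
  rw [hu]
  rw [Matrix.mulVec_add, add_dotProduct, dotProduct_add, dotProduct_add]
  rw [Matrix.mulVec_smul]
  simp only [smul_dotProduct, dotProduct_smul, smul_eq_mul]
  rw [h1, h2, h3, mulVec_dn J hd x i]
  ring

lemma condProb_ising {n : ℕ} (J : Matrix (Fin n) (Fin n) ℝ) (hs : J.IsSymm)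
    (hd : ∀ i, J i i = 0) (x : Fin n → Bool) (i : Fin n) :
    condProb (ising J) x i = g (J.mulVec (sigmaVec x) i) := by
  set r := J.mulVec (sigmaVec x) i with hr
  set Z := ∑ y : Fin n → Bool, Real.exp ((1 / 2) * (sigmaVec y ⬝ᵥ J.mulVec (sigmaVec y))) with hZ
  have hZpos : 0 < Z := Finset.sum_pos (fun y _ => Real.exp_pos _) ⟨x, Finset.mem_univ x⟩
  set B := (1/2) * (sigmaVec (dn x i) ⬝ᵥ J.mulVec (sigmaVec (dn x i))) with hB
  have hA : (1/2) * (sigmaVec (up x i) ⬝ᵥ J.mulVec (sigmaVec (up x i))) = B + 2 * r := by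
    rw [quad_diff J hs hd x i]; ring
  have h1 : condProb (ising J) x i = Real.exp (B + 2*r) / (Real.exp (B + 2*r) + Real.exp B) := by
    rw [condProb, ising, ising, ← hZ, ← hB, hA]
    rw [← add_div, div_div_div_cancel_right₀]
    exact ne_of_gt hZpos
  rw [h1, g, Real.exp_add]
  have hEB : 0 < Real.exp B := Real.exp_pos _
  have hE2 : 0 < Real.exp (2*r) := Real.exp_pos _
  field_simp

lemma mulVec_sqrt_le {n : ℕ} (A : Matrix (Fin n) (Fin n) ℝ) (v : Fin n → ℝ) :
    Real.sqrt (∑ i, (A.mulVec v i)^2) ≤ specNorm A * Real.sqrt (∑ i, (v i)^2) := by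
  set w : EuclideanSpace ℝ (Fin n) := (WithLp.equiv 2 _).symm v with hw
  have hnormw : ‖w‖ = Real.sqrt (∑ i, (v i)^2) := by
    rw [EuclideanSpace.norm_eq]
    congr 1
    refine Finset.sum_congr rfl fun i _ => ?_
    rw [Real.norm_eq_abs, sq_abs]
    rfl
  have happ : Matrix.toEuclideanCLM (𝕜 := ℝ) A w = (WithLp.equiv 2 _).symm (A.mulVec v) := by
    exact Matrix.toEuclideanCLM_toLp A v
  have hbound := (Matrix.toEuclideanCLM (𝕜 := ℝ) A).le_opNorm w
  rw [happ, hnormw] at hbound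
  calc Real.sqrt (∑ i, (A.mulVec v i)^2)
      = ‖(WithLp.equiv 2 (Fin n → ℝ)).symm (A.mulVec v)‖ := by
        rw [EuclideanSpace.norm_eq]
        congr 1
        refine Finset.sum_congr rfl fun i _ => ?_
        rw [Real.norm_eq_abs, sq_abs]; rfl
    _ ≤ specNorm A * Real.sqrt (∑ i, (v i)^2) := hbound

theorem stmt4 {n : ℕ} (hn : 0 < n) (L M : Matrix (Fin n) (Fin n) ℝ)
    (hLsymm : L.IsSymm) (hLdiag : ∀ i, L i i = 0)
    (hMsymm : M.IsSymm) (hMdiag : ∀ i, M i i = 0)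
    (f : Fin n → (Fin n → Bool) → ℝ) (x : Fin n → Bool) :
    (1 / n) * ∑ i, |f i x| * |condProb (ising L) x i - condProb (ising M) x i|
      ≤ specNorm (L - M) * Real.sqrt (∑ i, (f i x) ^ 2) / (2 * Real.sqrt n) := by
  set w := (L - M).mulVec (sigmaVec x) with hw
  have hpt : ∀ i, |condProb (ising L) x i - condProb (ising M) x i| ≤ (1/2) * |w i| := by
    intro i
    rw [condProb_ising L hLsymm hLdiag, condProb_ising M hMsymm hMdiag]
    have hwi : w i = L.mulVec (sigmaVec x) i - M.mulVec (sigmaVec x) i := by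
      rw [hw, Matrix.sub_mulVec]; rfl
    rw [hwi]
    exact g_lip _ _
  have hsum1 : ∑ i, |f i x| * |condProb (ising L) x i - condProb (ising M) x i|
      ≤ (1/2) * ∑ i, |f i x| * |w i| := by
    rw [Finset.mul_sum]
    refine Finset.sum_le_sum fun i _ => ?_
    calc |f i x| * |condProb (ising L) x i - condProb (ising M) x i|
        ≤ |f i x| * ((1/2) * |w i|) :=
          mul_le_mul_of_nonneg_left (hpt i) (abs_nonneg _)
      _ = 1/2 * (|f i x| * |w i|) := by ring
  have hCS : ∑ i, |f i x| * |w i|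
      ≤ Real.sqrt (∑ i, (f i x)^2) * Real.sqrt (∑ i, (w i)^2) := by
    have h := Finset.sum_mul_sq_le_sq_mul_sq Finset.univ (fun i => |f i x|) (fun i => |w i|)
    simp only [sq_abs] at h
    rw [← Real.sqrt_mul (by positivity)]
    rw [Real.le_sqrt (by positivity)]
    · exact h
    · exact mul_nonneg (by positivity) (by positivity)
  have hsigma : (∑ i, (sigmaVec x i)^2) = (n : ℝ) := by
    have : ∀ i, (sigmaVec x i)^2 = 1 := by
      intro i; rcases Bool.dichotomy (x i) with h | h <;> simp [sigmaVec, spin, h]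
    simp [this]
  have hspec : Real.sqrt (∑ i, (w i)^2) ≤ specNorm (L - M) * Real.sqrt n := by
    have := mulVec_sqrt_le (L - M) (sigmaVec x)
    rwa [hsigma] at this
  have hF : (0:ℝ) ≤ Real.sqrt (∑ i, (f i x)^2) := Real.sqrt_nonneg _
  have hnm : (0:ℝ) < n := by exact_mod_cast hn
  have hsn : Real.sqrt n * Real.sqrt n = (n:ℝ) := Real.mul_self_sqrt (le_of_lt hnm)
  have hsn0 : (0:ℝ) < Real.sqrt n := Real.sqrt_pos.mpr hnm
  set F := Real.sqrt (∑ i, (f i x)^2)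
  set sp := specNorm (L - M)
  have hsp : (0:ℝ) ≤ sp := norm_nonneg _
  calc (1 / (n:ℝ)) * ∑ i, |f i x| * |condProb (ising L) x i - condProb (ising M) x i|
      ≤ (1 / (n:ℝ)) * ((1/2) * (F * (sp * Real.sqrt n))) := by
        apply mul_le_mul_of_nonneg_left _ (by positivity)
        calc ∑ i, |f i x| * |condProb (ising L) x i - condProb (ising M) x i|
            ≤ (1/2) * ∑ i, |f i x| * |w i| := hsum1
          _ ≤ (1/2) * (F * Real.sqrt (∑ i, (w i)^2)) := by
              apply mul_le_mul_of_nonneg_left hCS (by norm_num)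
          _ ≤ (1/2) * (F * (sp * Real.sqrt n)) := by
              apply mul_le_mul_of_nonneg_left (mul_le_mul_of_nonneg_left hspec hF) (by norm_num)
    _ = sp * F / (2 * Real.sqrt n) := by
        rw [eq_div_iff (by positivity)]
        field_simp
        linear_combination (F*sp) * hsn
end

section
/- Consider the Curie-Weiss Glauber dynamics at β > 1 with the monotone coupling of two chains X̂_t ≥ Ŷ_t. Suppose at time t−1 the states x, y satisfy x ≥ y coordinatewise and m_i(x) ≥ m_i(y) ≥ s_1 for all i, where m_i(z) = (1/n)Σ_{j≠i} z^j and s_1 is chosen so that g(s) = tanh(βs) − s satisfies g'(s) ≤ −γ*/2 for s ≥ s_1. Then E[m(X̂_t) − m(Ŷ_t) | X̂_{t−1} = x, Ŷ_{t−1} = y] ≤ ρ (m(x) − m(y)), where ρ = 1 − γ*(n−1)/(2n²). -/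
open Finset

/-- Average magnetization `m(x) = (1/n) Σ_i x^i`. -/
noncomputable def magAvg {n : ℕ} (x : Fin n → Bool) : ℝ := (∑ i, spin (x i)) / n

/-- Leave-one-out magnetization `m_i(x) = (1/n) Σ_{j≠i} x^j`. -/
noncomputable def magAvgErase {n : ℕ} (x : Fin n → Bool) (i : Fin n) : ℝ :=
  (∑ j ∈ Finset.univ.erase i, spin (x j)) / n

/-- One-step expected difference of magnetizations of the two monotonically coupled
Curie-Weiss Glauber chains started at `x ≥ y`. -/
noncomputable def coupledStep {n : ℕ} (β : ℝ) (x y : Fin n → Bool) : ℝ :=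
  magAvg x - magAvg y - (1 / (n : ℝ) ^ 2) * ∑ i, (spin (x i) - spin (y i))
    + (1 / (n : ℝ) ^ 2) * ∑ i,
        (Real.tanh (β * magAvgErase x i) - Real.tanh (β * magAvgErase y i))

lemma differentiable_tanh' : Differentiable ℝ Real.tanh := by
  have h : Real.tanh = fun x => Real.sinh x / Real.cosh x := funext Real.tanh_eq_sinh_div_cosh
  rw [h]
  exact Real.differentiable_sinh.div Real.differentiable_cosh fun z => (Real.cosh_pos z).ne'

lemma g_diff (β : ℝ) : Differentiable ℝ (fun u : ℝ => Real.tanh (β * u) - u) :=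
  (differentiable_tanh'.comp (differentiable_id.const_mul β)).sub differentiable_id

lemma spin_le_one (b : Bool) : spin b ≤ 1 := by
  unfold spin; split <;> norm_num

/-- Key contraction estimate from the derivative bound, via antitonicity of
`g(u) + (γ/2) u` on `[s1, 1]`. -/
lemma tanh_contract (β γ s1 : ℝ)
    (hderiv : ∀ s : ℝ, s1 ≤ s → s ≤ 1 →
      deriv (fun u : ℝ => Real.tanh (β * u) - u) s ≤ -γ / 2)
    {a b : ℝ} (ha : s1 ≤ a) (hab : a ≤ b) (hb : b ≤ 1) :
    Real.tanh (β * b) - Real.tanh (β * a) ≤ (1 - γ / 2) * (b - a) := by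
  set h : ℝ → ℝ := fun u => (Real.tanh (β * u) - u) + (γ / 2) * u with hh
  have hdiffh : Differentiable ℝ h := (g_diff β).add (differentiable_id.const_mul _)
  have hanti : AntitoneOn h (Set.Icc s1 1) := by
    apply antitoneOn_of_deriv_nonpos (convex_Icc s1 1) hdiffh.continuous.continuousOn
      (fun s _ => (hdiffh s).differentiableWithinAt)
    intro s hs
    have hs' : s ∈ Set.Icc s1 1 := interior_subset hs
    have hg : DifferentiableAt ℝ (fun u : ℝ => γ / 2 * u) s := by fun_prop
    have hder : deriv h s = deriv (fun u : ℝ => Real.tanh (β * u) - u) s + γ / 2 := by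
      rw [hh, deriv_fun_add ((g_diff β) s) hg, deriv_const_mul _ differentiableAt_id]
      simp
    rw [hder]
    have := hderiv s hs'.1 hs'.2
    linarith
  have hmem_a : a ∈ Set.Icc s1 1 := ⟨ha, le_trans hab hb⟩
  have hmem_b : b ∈ Set.Icc s1 1 := ⟨le_trans ha hab, hb⟩
  have hba := hanti hmem_a hmem_b hab
  simp only [hh] at hba
  nlinarith

theorem stmt18 {n : ℕ} (hn : 2 ≤ n) (β γ s1 : ℝ) (hβ : 1 < β) (hγ : 0 < γ)
    (hderiv : ∀ s : ℝ, s1 ≤ s → s ≤ 1 →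
      deriv (fun u : ℝ => Real.tanh (β * u) - u) s ≤ -γ / 2)
    (x y : Fin n → Bool) (hxy : ∀ i, spin (y i) ≤ spin (x i))
    (hs1 : ∀ i : Fin n, s1 ≤ magAvgErase y i) :
    coupledStep β x y ≤ (1 - γ * (n - 1) / (2 * (n : ℝ) ^ 2)) * (magAvg x - magAvg y) := by
  have hn0 : (0:ℝ) < n := by exact_mod_cast (by omega : 0 < n)
  have hne : (n:ℝ) ≠ 0 := hn0.ne'
  set D := magAvg x - magAvg y with hD
  have hDsum : ∑ i, (spin (x i) - spin (y i)) = n * D := by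
    rw [hD, magAvg, magAvg, Finset.sum_sub_distrib]
    field_simp
  have hD0 : 0 ≤ D := by
    have h1 : 0 ≤ ∑ i, (spin (x i) - spin (y i)) :=
      Finset.sum_nonneg fun i _ => by linarith [hxy i]
    rw [hDsum] at h1
    nlinarith
  have herase : ∀ z : Fin n → Bool, ∑ i, magAvgErase z i = ((n:ℝ) - 1) * magAvg z := by
    intro z
    unfold magAvgErase magAvg
    rw [← Finset.sum_div]
    rw [Finset.sum_congr rfl fun i _ => Finset.sum_erase_eq_sub (Finset.mem_univ i),
      Finset.sum_sub_distrib, Finset.sum_const, Finset.card_univ, Fintype.card_fin]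
    push_cast
    ring
  have hmono : ∀ i, magAvgErase y i ≤ magAvgErase x i := by
    intro i
    unfold magAvgErase
    gcongr with j hj
    exact hxy j
  have hx1 : ∀ i, magAvgErase x i ≤ 1 := by
    intro i
    unfold magAvgErase
    rw [div_le_one hn0]
    calc ∑ j ∈ Finset.univ.erase i, spin (x j)
        ≤ ∑ j ∈ Finset.univ.erase i, 1 := Finset.sum_le_sum fun j _ => spin_le_one (x j)
      _ = ((Finset.univ.erase i).card : ℝ) := by rw [Finset.sum_const]; simp
      _ ≤ (n : ℝ) := by
          rw [Finset.card_erase_of_mem (Finset.mem_univ i), Finset.card_univ, Fintype.card_fin]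
          have : (n - 1 : ℕ) ≤ n := Nat.sub_le n 1
          exact_mod_cast this
  have hterm : ∀ i, Real.tanh (β * magAvgErase x i) - Real.tanh (β * magAvgErase y i)
      ≤ (1 - γ / 2) * (magAvgErase x i - magAvgErase y i) := fun i =>
    tanh_contract β γ s1 hderiv (hs1 i) (hmono i) (hx1 i)
  have hT : ∑ i, (Real.tanh (β * magAvgErase x i) - Real.tanh (β * magAvgErase y i))
      ≤ (1 - γ / 2) * (((n:ℝ) - 1) * D) := by
    calc ∑ i, (Real.tanh (β * magAvgErase x i) - Real.tanh (β * magAvgErase y i))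
        ≤ ∑ i, (1 - γ / 2) * (magAvgErase x i - magAvgErase y i) :=
          Finset.sum_le_sum fun i _ => hterm i
      _ = (1 - γ / 2) * (∑ i, magAvgErase x i - ∑ i, magAvgErase y i) := by
          rw [← Finset.mul_sum, Finset.sum_sub_distrib]
      _ = (1 - γ / 2) * (((n:ℝ) - 1) * D) := by rw [herase x, herase y, hD]; ring
  unfold coupledStep
  rw [← hD, hDsum]
  have hstep : (1 / (n:ℝ)^2) * ∑ i,
      (Real.tanh (β * magAvgErase x i) - Real.tanh (β * magAvgErase y i))
      ≤ (1 / (n:ℝ)^2) * ((1 - γ / 2) * (((n:ℝ) - 1) * D)) :=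
    mul_le_mul_of_nonneg_left hT (by positivity)
  have hfinal : D - (1 / (n:ℝ)^2) * ((n:ℝ) * D)
      + (1 / (n:ℝ)^2) * ((1 - γ / 2) * (((n:ℝ) - 1) * D))
      ≤ (1 - γ * ((n:ℝ) - 1) / (2 * (n : ℝ) ^ 2)) * D := by
    have h2 : (0:ℝ) < (n:ℝ)^2 := by positivity
    rw [← sub_nonneg]
    have hid : (1 - γ * ((n:ℝ) - 1) / (2 * (n : ℝ) ^ 2)) * D
        - (D - (1 / (n:ℝ)^2) * ((n:ℝ) * D)
          + (1 / (n:ℝ)^2) * ((1 - γ / 2) * (((n:ℝ) - 1) * D))) = D / (n:ℝ)^2 := by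
      field_simp
      ring
    rw [hid]
    positivity
  linarith
end
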